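/- For every real α > -1 and every integer n ≥ 3, the best Markov constant satisfies c_n(α)² ≥ n²/((α+1)(α+3)) + (2α²+5α+6)n/(3(α+1)(α+2)(α+3)) + (α+6)/(3(α+2)(α+3)). -/

import Mathlib

open Polynomial Finset MeasureTheory
noncomputable section

/-- `pp α k = (α+1)(α+2)⋯(α+k)` -/
def pp (α : ℝ) (k : ℕ) : ℝ := ∏ j ∈ Finset.range k, (α + j + 1)

/-- normalized Laguerre square norm `h_k = pp k / k!` -/
def hh (α : ℝ) (k : ℕ) : ℝ := pp α k / (k.factorial : ℝ)

lemma pp_pos {α : ℝ} (hα : -1 < α) (k : ℕ) : 0 < pp α k := by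
  apply Finset.prod_pos
  intro j _
  have : (0:ℝ) ≤ j := Nat.cast_nonneg j
  linarith

lemma pp_succ (α : ℝ) (k : ℕ) : pp α (k+1) = pp α k * (α + k + 1) :=
  Finset.prod_range_succ _ _

lemma hh_pos {α : ℝ} (hα : -1 < α) (k : ℕ) : 0 < hh α k := by
  apply div_pos (pp_pos hα k)
  exact_mod_cast Nat.factorial_pos k

lemma hh_succ (α : ℝ) (k : ℕ) : hh α (k+1) = hh α k * (α + k + 1) / (k+1) := by
  have hk : ((k.factorial : ℝ)) ≠ 0 := by exact_mod_cast Nat.factorial_ne_zero k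
  have hk1 : ((k:ℝ)+1) ≠ 0 := by positivity
  simp only [hh, pp_succ, Nat.factorial_succ]
  push_cast
  field_simp

lemma Gamma_shift {α : ℝ} (hα : -1 < α) (m : ℕ) :
    Real.Gamma (α + m + 1) = pp α m * Real.Gamma (α + 1) := by
  induction m with
  | zero => simp [pp]
  | succ m ih =>
    have h1 : α + (m+1 : ℕ) + 1 = (α + m + 1) + 1 := by push_cast; ring
    have h2 : (0:ℝ) < α + m + 1 := by
      have : (0:ℝ) ≤ m := Nat.cast_nonneg m
      linarith
    rw [h1, Real.Gamma_add_one (ne_of_gt h2), ih, pp_succ]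
    ring


/-- generalized Laguerre polynomial (Rodrigues coefficients) -/
def Lag (α : ℝ) (k : ℕ) : Polynomial ℝ :=
  ∑ i ∈ Finset.range (k+1),
    Polynomial.C ((-1)^i * (∏ j ∈ Finset.Ico i k, (α + j + 1)) /
      ((i.factorial : ℝ) * ((k-i).factorial : ℝ))) * Polynomial.X ^ i

lemma Lag_coeff (α : ℝ) (k m : ℕ) :
    (Lag α k).coeff m = if m ≤ k then
      (-1)^m * (∏ j ∈ Finset.Ico m k, (α + j + 1)) /
        ((m.factorial : ℝ) * ((k-m).factorial : ℝ)) else 0 := by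
  rw [Lag, Polynomial.finset_sum_coeff]
  simp only [Polynomial.coeff_C_mul, Polynomial.coeff_X_pow]
  have : ∀ i ∈ Finset.range (k+1),
      ((-1:ℝ)^i * (∏ j ∈ Finset.Ico i k, (α + j + 1)) /
        ((i.factorial : ℝ) * ((k-i).factorial : ℝ))) * (if m = i then 1 else 0)
      = (if i = m then ((-1:ℝ)^i * (∏ j ∈ Finset.Ico i k, (α + j + 1)) /
        ((i.factorial : ℝ) * ((k-i).factorial : ℝ))) else 0) := by
    intro i _
    by_cases h : i = m
    · subst h; simp
    · rw [if_neg h, if_neg (fun hmi => h hmi.symm), mul_zero]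
  rw [Finset.sum_congr rfl this, Finset.sum_ite_eq']
  simp [Finset.mem_range, Nat.lt_succ_iff]

lemma Lag_coeff_of_le (α : ℝ) {k m : ℕ} (h : m ≤ k) :
    (Lag α k).coeff m = (-1)^m * (∏ j ∈ Finset.Ico m k, (α + j + 1)) /
        ((m.factorial : ℝ) * ((k-m).factorial : ℝ)) := by
  rw [Lag_coeff, if_pos h]

lemma Lag_coeff_of_gt (α : ℝ) {k m : ℕ} (h : k < m) : (Lag α k).coeff m = 0 := by
  rw [Lag_coeff, if_neg (by omega)]

lemma Lag_natDegree_le (α : ℝ) (k : ℕ) : (Lag α k).natDegree ≤ k :=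
  Polynomial.natDegree_le_iff_coeff_eq_zero.2 fun _ h => Lag_coeff_of_gt α h

lemma Lag_coeff_self (α : ℝ) (k : ℕ) :
    (Lag α k).coeff k = (-1)^k / (k.factorial : ℝ) := by
  rw [Lag_coeff_of_le α le_rfl]
  simp

lemma Lag_zero (α : ℝ) : Lag α 0 = Polynomial.C 1 := by
  simp [Lag]

/-- derivative identity: (L_{k+1}^{(α)})' = -L_k^{(α+1)} -/
lemma Lag_derivative (α : ℝ) (k : ℕ) :
    Polynomial.derivative (Lag α (k+1)) = -(Lag (α+1) k) := by
  ext m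
  rw [Polynomial.coeff_derivative, Polynomial.coeff_neg]
  by_cases h : m ≤ k
  · rw [Lag_coeff_of_le α (by omega : m+1 ≤ k+1), Lag_coeff_of_le (α+1) h]
    have hprod : (∏ j ∈ Finset.Ico (m+1) (k+1), (α + j + 1))
        = ∏ j ∈ Finset.Ico m k, (α + 1 + j + 1) := by
      rw [Finset.prod_Ico_eq_prod_range, Finset.prod_Ico_eq_prod_range]
      simp only [Nat.add_sub_add_right]
      apply Finset.prod_congr rfl
      intro j _
      push_cast; ring
    rw [hprod]
    have h1 : (k+1) - (m+1) = k - m := by omega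
    rw [h1, Nat.factorial_succ]
    have hm : ((m.factorial : ℝ)) ≠ 0 := by exact_mod_cast Nat.factorial_ne_zero m
    have hkm : (((k-m).factorial : ℝ)) ≠ 0 := by exact_mod_cast Nat.factorial_ne_zero (k-m)
    have hm1 : ((m:ℝ)+1) ≠ 0 := by positivity
    push_cast
    field_simp
    ring
  · rw [Lag_coeff_of_gt α (by omega), Lag_coeff_of_gt (α+1) (by omega)]
    simp

/-- `L_k^{(α+1)} = ∑_{j ≤ k} L_j^{(α)}` -/
lemma Lag_shift_sum (α : ℝ) (k : ℕ) :
    Lag (α+1) k = ∑ j ∈ Finset.range (k+1), Lag α j := by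
  induction k with
  | zero => simp [Lag]
  | succ k ih =>
    rw [Finset.sum_range_succ, ← ih]
    ext m
    rw [Polynomial.coeff_add]
    by_cases h : m ≤ k
    · rw [Lag_coeff_of_le (α+1) (by omega : m ≤ k+1), Lag_coeff_of_le (α+1) h,
        Lag_coeff_of_le α (by omega : m ≤ k+1)]
      have e1 : (∏ j ∈ Finset.Ico m (k+1), (α + 1 + j + 1))
          = (∏ j ∈ Finset.Ico m k, (α + 1 + j + 1)) * (α + 1 + k + 1) :=
        Finset.prod_Ico_succ_top (by omega) _
      have e2 : (∏ j ∈ Finset.Ico m (k+1), (α + j + 1))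
          = (α + m + 1) * ∏ j ∈ Finset.Ico m k, (α + 1 + j + 1) := by
        rw [Finset.prod_eq_prod_Ico_succ_bot (by omega : m < k+1)]
        congr 1
        rw [Finset.prod_Ico_eq_prod_range, Finset.prod_Ico_eq_prod_range]
        simp only [Nat.add_sub_add_right]
        apply Finset.prod_congr rfl
        intro j _; push_cast; ring
      rw [e1, e2]
      have h1 : (k+1) - m = (k - m) + 1 := by omega
      rw [h1, Nat.factorial_succ]
      have hm : ((m.factorial : ℝ)) ≠ 0 := by exact_mod_cast Nat.factorial_ne_zero m
      have hkm : (((k-m).factorial : ℝ)) ≠ 0 := by exact_mod_cast Nat.factorial_ne_zero (k-m)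
      have hle : (m:ℝ) ≤ k := by exact_mod_cast h
      have hkm1 : ((k:ℝ)-m+1) ≠ 0 := by linarith
      have hcast : (((k - m : ℕ) : ℝ)) = (k:ℝ) - m := by
        rw [Nat.cast_sub h]
      push_cast
      rw [hcast]
      field_simp
      ring
    · by_cases h2 : m = k+1
      · subst h2
        rw [Lag_coeff_of_le (α+1) le_rfl, Lag_coeff_of_gt (α+1) (by omega),
          Lag_coeff_of_le α le_rfl]
        simp
      · rw [Lag_coeff_of_gt (α+1) (by omega), Lag_coeff_of_gt (α+1) (by omega),
          Lag_coeff_of_gt α (by omega)]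
        simp


/-- k-th finite difference of a polynomial of degree ≤ k. -/
lemma fd_lemma : ∀ (k : ℕ) (Q : Polynomial ℝ), Q.degree ≤ k →
    ∑ i ∈ Finset.range (k+1), (-1:ℝ)^i * (k.choose i : ℝ) * Q.eval (i : ℝ)
      = (-1)^k * (k.factorial : ℝ) * Q.coeff k := by
  intro k
  induction k with
  | zero =>
    intro Q hQ
    have : Q = Polynomial.C (Q.coeff 0) := Polynomial.eq_C_of_degree_le_zero hQ
    rw [this]; simp
  | succ k ih =>
    intro Q hQ
    set R : Polynomial ℝ := Q - Q.comp (Polynomial.X + 1) with hR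
    have hcomp_coeff : ∀ m, (Q.comp (Polynomial.X + 1)).coeff m
        = ∑ j ∈ Finset.range (Q.natDegree + 1), Q.coeff j * (j.choose m : ℝ) := by
      intro m
      rw [Polynomial.comp_eq_sum_left, Polynomial.sum_def, Polynomial.finset_sum_coeff]
      simp only [Polynomial.coeff_C_mul, Polynomial.coeff_X_add_one_pow]
      apply Finset.sum_subset (Polynomial.supp_subset_range_natDegree_succ)
      intro j _ hj
      rw [Polynomial.notMem_support_iff.1 hj, zero_mul]
    have hQdeg : Q.natDegree ≤ k + 1 := Polynomial.natDegree_le_iff_degree_le.2 hQ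
    have hcoeff_high : ∀ m, k + 1 < m → Q.coeff m = 0 := by
      intro m hm; exact Polynomial.coeff_eq_zero_of_natDegree_lt (lt_of_le_of_lt hQdeg hm)
    have hRcoeff : ∀ m, k < m → R.coeff m = 0 := by
      intro m hm
      rw [hR, Polynomial.coeff_sub, hcomp_coeff]
      by_cases hmq : m ≤ Q.natDegree
      · -- then m = k+1 = natDegree
        have hm1 : m = k + 1 := by omega
        subst hm1
        have : ∀ j ∈ Finset.range (Q.natDegree + 1), Q.coeff j * ((j.choose (k+1) : ℕ) : ℝ)
            = if j = k+1 then Q.coeff (k+1) else 0 := by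
          intro j hj
          simp only [Finset.mem_range] at hj
          by_cases hjk : j = k+1
          · subst hjk; simp
          · have : j < k+1 := by omega
            rw [Nat.choose_eq_zero_of_lt this]; simp [hjk]
        rw [Finset.sum_congr rfl this, Finset.sum_ite_eq' (Finset.range (Q.natDegree+1)) (k+1)]
        have : k+1 ∈ Finset.range (Q.natDegree + 1) := by simp; omega
        rw [if_pos this]; ring
      · have h1 : Q.coeff m = 0 := Polynomial.coeff_eq_zero_of_natDegree_lt (by omega)
        have : ∀ j ∈ Finset.range (Q.natDegree + 1), Q.coeff j * ((j.choose m : ℕ) : ℝ) = 0 := by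
          intro j hj
          simp only [Finset.mem_range] at hj
          rw [Nat.choose_eq_zero_of_lt (by omega)]; simp
        rw [Finset.sum_congr rfl this, h1]
        simp
    have hRdeg : R.degree ≤ k := by
      refine Polynomial.degree_le_iff_coeff_zero _ _ |>.2 ?_
      intro m hm
      have : k < m := by exact_mod_cast WithBot.coe_lt_coe.1 (lt_of_le_of_lt (by exact_mod_cast le_refl _) hm)
      exact hRcoeff m (by exact_mod_cast this)
    have hRk : R.coeff k = -((k:ℝ)+1) * Q.coeff (k+1) := by
      rw [hR, Polynomial.coeff_sub, hcomp_coeff]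
      have : ∀ j ∈ Finset.range (Q.natDegree + 1), Q.coeff j * ((j.choose k : ℕ) : ℝ)
          = (if j = k then Q.coeff k else 0) + (if j = k+1 then ((k:ℝ)+1) * Q.coeff (k+1) else 0) := by
        intro j hj
        simp only [Finset.mem_range] at hj
        by_cases h1 : j = k
        · subst h1; simp [Nat.lt_irrefl]
        · by_cases h2 : j = k+1
          · subst h2
            simp [h1, Nat.choose_succ_self_right]
            ring
          · by_cases h3 : j < k
            · rw [Nat.choose_eq_zero_of_lt h3]; simp [h1, h2]
            · -- j > k+1
              rw [hcoeff_high j (by omega)]; simp [h1, h2]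
      rw [Finset.sum_congr rfl this, Finset.sum_add_distrib,
        Finset.sum_ite_eq' (Finset.range (Q.natDegree+1)) k,
        Finset.sum_ite_eq' (Finset.range (Q.natDegree+1)) (k+1)]
      by_cases hk1 : k+1 ≤ Q.natDegree
      · rw [if_pos (by simp; omega), if_pos (by simp; omega)]; ring
      · have hc0 : Q.coeff (k+1) = 0 := by
          by_cases hh : k + 1 ≤ Q.natDegree
          · omega
          · exact Polynomial.coeff_eq_zero_of_natDegree_lt (by omega)
        rw [hc0]
        by_cases hk : k ≤ Q.natDegree
        · rw [if_pos (by simp; omega : k ∈ Finset.range (Q.natDegree+1)),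
            if_neg (by simp; omega : ¬ (k+1 ∈ Finset.range (Q.natDegree+1)))]
          ring
        · rw [Polynomial.coeff_eq_zero_of_natDegree_lt (by omega),
            if_neg (by simp; omega : ¬ (k ∈ Finset.range (Q.natDegree+1))),
            if_neg (by simp; omega : ¬ (k+1 ∈ Finset.range (Q.natDegree+1)))]
          ring
    -- Abel summation step
    have heval : ∀ i : ℕ, R.eval (i:ℝ) = Q.eval (i:ℝ) - Q.eval ((i:ℝ)+1) := by
      intro i
      rw [hR, Polynomial.eval_sub, Polynomial.eval_comp]
      simp
    have habel : ∑ i ∈ Finset.range (k+2), (-1:ℝ)^i * ((k+1).choose i : ℝ) * Q.eval (i:ℝ)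
        = ∑ i ∈ Finset.range (k+1), (-1:ℝ)^i * (k.choose i : ℝ) * R.eval (i:ℝ) := by
      have key : ∑ i ∈ Finset.range (k+2), (-1:ℝ)^i * ((k+1).choose i : ℝ) * Q.eval (i:ℝ)
          = ∑ i ∈ Finset.range (k+2), (-1:ℝ)^i * ((k.choose i : ℝ) + (k.choose (i-1) : ℝ) * (if i = 0 then 0 else 1)) * Q.eval (i:ℝ) := by
        apply Finset.sum_congr rfl
        intro i _
        congr 2
        cases i with
        | zero => simp
        | succ i => rw [Nat.choose_succ_succ]; push_cast; ring
      rw [key]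
      have split : ∑ i ∈ Finset.range (k+2), (-1:ℝ)^i * ((k.choose i : ℝ) + (k.choose (i-1) : ℝ) * (if i = 0 then 0 else 1)) * Q.eval (i:ℝ)
          = (∑ i ∈ Finset.range (k+2), (-1:ℝ)^i * (k.choose i : ℝ) * Q.eval (i:ℝ))
            + ∑ i ∈ Finset.range (k+2), (-1:ℝ)^i * ((k.choose (i-1) : ℝ) * (if i = 0 then 0 else 1)) * Q.eval (i:ℝ) := by
        rw [← Finset.sum_add_distrib]
        apply Finset.sum_congr rfl
        intro i _; ring
      rw [split]
      have e1 : ∑ i ∈ Finset.range (k+2), (-1:ℝ)^i * (k.choose i : ℝ) * Q.eval (i:ℝ)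
          = ∑ i ∈ Finset.range (k+1), (-1:ℝ)^i * (k.choose i : ℝ) * Q.eval (i:ℝ) := by
        rw [Finset.sum_range_succ, Nat.choose_eq_zero_of_lt (by omega)]
        simp
      have e2 : ∑ i ∈ Finset.range (k+2), (-1:ℝ)^i * ((k.choose (i-1) : ℝ) * (if i = 0 then 0 else 1)) * Q.eval (i:ℝ)
          = ∑ i ∈ Finset.range (k+1), -((-1:ℝ)^i * (k.choose i : ℝ) * Q.eval ((i:ℝ)+1)) := by
        rw [Finset.sum_range_succ']
        simp only [Nat.add_sub_cancel, if_pos rfl, if_true, mul_zero, zero_mul, add_zero,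
          eq_self_iff_true]
        apply Finset.sum_congr rfl
        intro i _
        rw [if_neg (Nat.succ_ne_zero i)]
        push_cast
        ring
      rw [e1, e2, ← Finset.sum_add_distrib]
      apply Finset.sum_congr rfl
      intro i _
      rw [heval]
      ring
    calc ∑ i ∈ Finset.range (k+1+1), (-1:ℝ)^i * ((k+1).choose i : ℝ) * Q.eval (i:ℝ)
        = ∑ i ∈ Finset.range (k+1), (-1:ℝ)^i * (k.choose i : ℝ) * R.eval (i:ℝ) := habel
      _ = (-1)^k * (k.factorial : ℝ) * R.coeff k := ih R hRdeg
      _ = (-1)^(k+1) * ((k+1).factorial : ℝ) * Q.coeff (k+1) := by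
          rw [hRk, Nat.factorial_succ]
          push_cast
          ring


section DGint
variable (α : ℝ)

noncomputable def gint (p : Polynomial ℝ) : ℝ := p.sum fun m c => c * Real.Gamma (α + m + 1)

lemma gint_zero : gint α 0 = 0 := Polynomial.sum_zero_index _

lemma gint_add (p q : Polynomial ℝ) : gint α (p + q) = gint α p + gint α q :=
  Polynomial.sum_add_index p q _ (by simp) (by intros; ring)

lemma gint_smul (c : ℝ) (p : Polynomial ℝ) : gint α (c • p) = c * gint α p := by
  rw [gint, Polynomial.sum_smul_index p c _ (by simp)]
  rw [gint, Polynomial.sum_def, Polynomial.sum_def, Finset.mul_sum]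
  apply Finset.sum_congr rfl
  intro m _; ring

noncomputable def gintHom : Polynomial ℝ →+ ℝ where
  toFun := gint α
  map_zero' := gint_zero α
  map_add' := gint_add α

lemma gint_sum {ι : Type*} (s : Finset ι) (f : ι → Polynomial ℝ) :
    gint α (∑ i ∈ s, f i) = ∑ i ∈ s, gint α (f i) :=
  map_sum (gintHom α) f s

lemma gint_monomial (r : ℕ) (a : ℝ) : gint α (Polynomial.C a * Polynomial.X ^ r)
    = a * Real.Gamma (α + r + 1) := by
  rw [Polynomial.C_mul_X_pow_eq_monomial, gint, Polynomial.sum_monomial_index]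
  simp

lemma gint_neg (p : Polynomial ℝ) : gint α (-p) = - gint α p := by
  have := gint_smul α (-1) p
  simpa using this

end DGint

section EOrtho
variable {α : ℝ}

lemma gint_C_mul (α : ℝ) (a : ℝ) (q : Polynomial ℝ) :
    gint α (Polynomial.C a * q) = a * gint α q := by
  rw [← Polynomial.smul_eq_C_mul, gint_smul]

/-- the auxiliary monic polynomial `Q_m(y) = (y+α+1)⋯(y+α+m)` -/
noncomputable def Qm (α : ℝ) (m : ℕ) : Polynomial ℝ :=
  ∏ t ∈ Finset.range m, (Polynomial.X + Polynomial.C (α + t + 1))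

lemma Qm_monic (α : ℝ) (m : ℕ) : (Qm α m).Monic :=
  Polynomial.monic_prod_of_monic _ _ fun t _ => Polynomial.monic_X_add_C _

lemma Qm_natDegree (α : ℝ) (m : ℕ) : (Qm α m).natDegree = m := by
  rw [Qm, Polynomial.natDegree_prod_of_monic _ _ (fun t _ => Polynomial.monic_X_add_C _)]
  have : ∀ t ∈ Finset.range m, (Polynomial.X + Polynomial.C (α + t + 1)).natDegree = 1 :=
    fun t _ => Polynomial.natDegree_X_add_C _
  rw [Finset.sum_congr rfl this, Finset.sum_const, Finset.card_range, smul_eq_mul, mul_one]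

lemma Qm_eval (α : ℝ) (m : ℕ) (x : ℝ) :
    (Qm α m).eval x = ∏ t ∈ Finset.range m, (x + α + t + 1) := by
  rw [Qm, Polynomial.eval_prod]
  apply Finset.prod_congr rfl
  intro t _
  simp; ring

lemma pp_split (α : ℝ) (i m : ℕ) : pp α (i + m) = pp α i * (Qm α m).eval (i : ℝ) := by
  rw [pp, ← Finset.prod_range_mul_prod_Ico _ (Nat.le_add_right i m), Qm_eval]
  congr 1
  rw [Finset.prod_Ico_eq_prod_range]
  simp only [Nat.add_sub_cancel_left]
  apply Finset.prod_congr rfl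
  intro t _
  push_cast; ring

lemma pp_Ico (α : ℝ) {i k : ℕ} (h : i ≤ k) :
    pp α i * (∏ j ∈ Finset.Ico i k, (α + j + 1)) = pp α k := by
  rw [pp, pp, Finset.prod_range_mul_prod_Ico _ h]

lemma gint_lag_mul_Xpow {α : ℝ} (hα : -1 < α) {k m : ℕ} (hmk : m ≤ k) :
    gint α (Lag α k * Polynomial.X ^ m)
      = if m = k then (-1:ℝ)^k * pp α k * Real.Gamma (α+1) else 0 := by
  have hexp : Lag α k * Polynomial.X ^ m
      = ∑ i ∈ Finset.range (k+1),
          Polynomial.C ((-1)^i * (∏ j ∈ Finset.Ico i k, (α + j + 1)) /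
            ((i.factorial : ℝ) * ((k-i).factorial : ℝ))) * Polynomial.X ^ (i+m) := by
    rw [Lag, Finset.sum_mul]
    apply Finset.sum_congr rfl
    intro i _
    rw [mul_assoc, ← pow_add]
  rw [hexp, gint_sum]
  have hterm : ∀ i ∈ Finset.range (k+1),
      gint α (Polynomial.C ((-1)^i * (∏ j ∈ Finset.Ico i k, (α + j + 1)) /
            ((i.factorial : ℝ) * ((k-i).factorial : ℝ))) * Polynomial.X ^ (i+m))
      = (Real.Gamma (α+1) * pp α k / (k.factorial : ℝ))
          * ((-1:ℝ)^i * (k.choose i : ℝ) * (Qm α m).eval (i:ℝ)) := by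
    intro i hi
    simp only [Finset.mem_range, Nat.lt_succ_iff] at hi
    rw [gint_monomial]
    rw [show α + ((i+m : ℕ) : ℝ) + 1 = α + ((i+m : ℕ) : ℝ) + 1 from rfl]
    rw [Gamma_shift hα (i+m), pp_split α i m]
    have h1 : (∏ j ∈ Finset.Ico i k, (α + j + 1)) = pp α k / pp α i := by
      field_simp [ne_of_gt (pp_pos hα i)]
      rw [mul_comm]
      exact pp_Ico α hi
    rw [h1]
    have h2 : ((k.choose i : ℕ) : ℝ) * (i.factorial : ℝ) * ((k-i).factorial : ℝ) = (k.factorial : ℝ) := by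
      exact_mod_cast congrArg (Nat.cast : ℕ → ℝ) (Nat.choose_mul_factorial_mul_factorial hi)
    have hif : ((i.factorial : ℕ):ℝ) ≠ 0 := by exact_mod_cast Nat.factorial_ne_zero i
    have hkif : (((k-i).factorial : ℕ):ℝ) ≠ 0 := by exact_mod_cast Nat.factorial_ne_zero (k-i)
    have hkf : ((k.factorial : ℕ):ℝ) ≠ 0 := by exact_mod_cast Nat.factorial_ne_zero k
    have hppi : pp α i ≠ 0 := ne_of_gt (pp_pos hα i)
    field_simp
    rw [← h2]
    ring
  rw [Finset.sum_congr rfl hterm, ← Finset.mul_sum]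
  have hdeg : (Qm α m).degree ≤ (k : WithBot ℕ) := by
    refine le_trans (Polynomial.degree_le_natDegree) ?_
    rw [Qm_natDegree]
    exact_mod_cast hmk
  rw [fd_lemma k (Qm α m) hdeg]
  by_cases h : m = k
  · subst h
    rw [if_pos rfl]
    have : (Qm α m).coeff m = 1 := by
      have := (Qm_monic α m).coeff_natDegree
      rwa [Qm_natDegree] at this
    rw [this]
    have hkf : ((m.factorial : ℕ):ℝ) ≠ 0 := by exact_mod_cast Nat.factorial_ne_zero m
    field_simp
  · rw [if_neg h]
    have : (Qm α m).coeff k = 0 := by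
      apply Polynomial.coeff_eq_zero_of_natDegree_lt
      rw [Qm_natDegree]; omega
    rw [this]
    ring

lemma gint_lag_mul_lag_le {α : ℝ} (hα : -1 < α) {j k : ℕ} (hjk : j ≤ k) :
    gint α (Lag α k * Lag α j)
      = if j = k then pp α k / (k.factorial : ℝ) * Real.Gamma (α+1) else 0 := by
  have hrep : Lag α j = ∑ i ∈ Finset.range (j+1),
      Polynomial.C ((Lag α j).coeff i) * Polynomial.X ^ i := by
    conv_lhs => rw [Polynomial.as_sum_range' (Lag α j) (j+1)
      (Nat.lt_succ_of_le (Lag_natDegree_le α j))]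
    apply Finset.sum_congr rfl
    intro i _
    rw [Polynomial.C_mul_X_pow_eq_monomial]
  conv_lhs => rw [hrep]
  rw [Finset.mul_sum, gint_sum]
  have hterm : ∀ i ∈ Finset.range (j+1),
      gint α (Lag α k * (Polynomial.C ((Lag α j).coeff i) * Polynomial.X ^ i))
      = (Lag α j).coeff i * (if i = k then (-1:ℝ)^k * pp α k * Real.Gamma (α+1) else 0) := by
    intro i hi
    simp only [Finset.mem_range, Nat.lt_succ_iff] at hi
    have : Lag α k * (Polynomial.C ((Lag α j).coeff i) * Polynomial.X ^ i)
        = Polynomial.C ((Lag α j).coeff i) * (Lag α k * Polynomial.X ^ i) := by ring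
    rw [this, gint_C_mul, gint_lag_mul_Xpow hα (le_trans hi hjk)]
  rw [Finset.sum_congr rfl hterm]
  by_cases h : j = k
  · subst h
    have : ∀ i ∈ Finset.range (j+1),
        (Lag α j).coeff i * (if i = j then (-1:ℝ)^j * pp α j * Real.Gamma (α+1) else 0)
        = if i = j then (Lag α j).coeff j * ((-1:ℝ)^j * pp α j * Real.Gamma (α+1)) else 0 := by
      intro i _
      by_cases hij : i = j
      · subst hij; simp
      · simp [hij]
    rw [Finset.sum_congr rfl this, Finset.sum_ite_eq' (Finset.range (j+1)) j, if_pos (by simp)]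
    rw [Lag_coeff_self, if_pos rfl]
    have hsq : (-1:ℝ)^j * (-1:ℝ)^j = 1 := by
      rw [← pow_add]
      exact Even.neg_one_pow ⟨j, by ring⟩
    have hre : (-1:ℝ)^j / (j.factorial:ℝ) * ((-1:ℝ)^j * pp α j * Real.Gamma (α+1))
        = ((-1:ℝ)^j*(-1:ℝ)^j) * (pp α j / (j.factorial:ℝ) * Real.Gamma (α+1)) := by ring
    rw [hre, hsq, one_mul]
  · rw [if_neg h]
    apply Finset.sum_eq_zero
    intro i hi
    simp only [Finset.mem_range, Nat.lt_succ_iff] at hi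
    rw [if_neg (by omega), mul_zero]

lemma gint_lag_mul_lag {α : ℝ} (hα : -1 < α) (j k : ℕ) :
    gint α (Lag α j * Lag α k)
      = if j = k then pp α k / (k.factorial : ℝ) * Real.Gamma (α+1) else 0 := by
  rcases le_total j k with h | h
  · rw [mul_comm]; exact gint_lag_mul_lag_le hα h
  · rw [gint_lag_mul_lag_le hα h]
    by_cases hjk : j = k
    · subst hjk; simp
    · rw [if_neg hjk, if_neg (fun hx => hjk hx.symm)]

/-- expansion of the quadratic form in the Laguerre basis -/
lemma gint_expand {α : ℝ} (hα : -1 < α) (M : ℕ) (c e : ℕ → ℝ) :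
    gint α ((∑ k ∈ Finset.range M, c k • Lag α k) * (∑ l ∈ Finset.range M, e l • Lag α l))
      = Real.Gamma (α+1) * ∑ k ∈ Finset.range M, c k * e k * hh α k := by
  rw [Finset.sum_mul]
  rw [gint_sum]
  have h1 : ∀ k ∈ Finset.range M,
      gint α ((c k • Lag α k) * ∑ l ∈ Finset.range M, e l • Lag α l)
      = c k * e k * hh α k * Real.Gamma (α+1) := by
    intro k hk
    rw [Finset.mul_sum, gint_sum]
    have h2 : ∀ l ∈ Finset.range M,
        gint α ((c k • Lag α k) * (e l • Lag α l))
        = if l = k then c k * e k * hh α k * Real.Gamma (α+1) else 0 := by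
      intro l hl
      have : (c k • Lag α k) * (e l • Lag α l) = (c k * e l) • (Lag α k * Lag α l) := by
        rw [smul_mul_assoc, mul_smul_comm, smul_smul]
      rw [this, gint_smul, gint_lag_mul_lag hα k l]
      by_cases hlk : l = k
      · subst hlk; rw [if_pos rfl, if_pos rfl, hh]; ring
      · rw [if_neg (fun hx => hlk hx.symm), if_neg hlk, mul_zero]
    rw [Finset.sum_congr rfl h2, Finset.sum_ite_eq' (Finset.range M) k, if_pos hk]
  rw [Finset.sum_congr rfl h1, ← Finset.sum_mul]
  ring

end EOrtho


section FInt
-- integral identity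

lemma integrable_rpow_exp {α : ℝ} (hα : -1 < α) (m : ℕ) (a : ℝ) :
    MeasureTheory.IntegrableOn
      (fun x : ℝ => a * (x ^ m * (x ^ α * Real.exp (-x)))) (Set.Ioi 0) := by
  have h1 : (0:ℝ) < α + m + 1 := by
    have : (0:ℝ) ≤ m := Nat.cast_nonneg m
    linarith
  have base := Real.GammaIntegral_convergent h1
  have : MeasureTheory.IntegrableOn
      (fun x : ℝ => a * (Real.exp (-x) * x ^ (α + m + 1 - 1))) (Set.Ioi 0) := base.const_mul a
  apply this.congr_fun ?_ measurableSet_Ioi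
  intro x hx
  have hx0 : (0:ℝ) < x := hx
  have hxm : x ^ (m:ℝ) = x ^ m := Real.rpow_natCast x m
  simp only [show α + m + 1 - 1 = (m:ℝ) + α from by ring, Real.rpow_add hx0, hxm]
  ring

lemma integral_pow_weight {α : ℝ} (hα : -1 < α) (m : ℕ) (a : ℝ) :
    ∫ x in Set.Ioi (0:ℝ), a * (x ^ m * (x ^ α * Real.exp (-x)))
      = a * Real.Gamma (α + m + 1) := by
  have h1 : (0:ℝ) < α + m + 1 := by
    have : (0:ℝ) ≤ m := Nat.cast_nonneg m
    linarith
  rw [Real.Gamma_eq_integral h1, ← MeasureTheory.integral_const_mul]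
  apply MeasureTheory.setIntegral_congr_fun measurableSet_Ioi
  intro x hx
  have hx0 : (0:ℝ) < x := hx
  have hxm : x ^ (m:ℝ) = x ^ m := Real.rpow_natCast x m
  simp only [show α + m + 1 - 1 = (m:ℝ) + α from by ring, Real.rpow_add hx0, hxm]
  ring

/-- the key analytic identity: the weighted integral of `p²` equals `gint (p*p)`. -/
lemma integral_eq_gint {α : ℝ} (hα : -1 < α) (p : Polynomial ℝ) :
    ∫ x in Set.Ioi (0:ℝ), (p.eval x) ^ 2 * (x ^ α * Real.exp (-x))
      = gint α (p * p) := by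
  set q := p * p with hq
  have hev : ∀ x : ℝ, (p.eval x) ^ 2 * (x ^ α * Real.exp (-x))
      = ∑ m ∈ Finset.range (q.natDegree + 1),
          q.coeff m * (x ^ m * (x ^ α * Real.exp (-x))) := by
    intro x
    have : (p.eval x)^2 = q.eval x := by rw [hq]; simp [sq]
    rw [this, Polynomial.eval_eq_sum_range, Finset.sum_mul]
    apply Finset.sum_congr rfl
    intro m _
    ring
  have hint : ∫ x in Set.Ioi (0:ℝ), (p.eval x) ^ 2 * (x ^ α * Real.exp (-x))
      = ∑ m ∈ Finset.range (q.natDegree + 1),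
          ∫ x in Set.Ioi (0:ℝ), q.coeff m * (x ^ m * (x ^ α * Real.exp (-x))) := by
    rw [← MeasureTheory.integral_finset_sum]
    · apply MeasureTheory.setIntegral_congr_fun measurableSet_Ioi
      intro x _
      exact hev x
    · intro m _
      exact integrable_rpow_exp hα m (q.coeff m)
  rw [hint]
  have : ∀ m ∈ Finset.range (q.natDegree + 1),
      (∫ x in Set.Ioi (0:ℝ), q.coeff m * (x ^ m * (x ^ α * Real.exp (-x))))
      = q.coeff m * Real.Gamma (α + m + 1) :=
    fun m _ => integral_pow_weight hα m (q.coeff m)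
  rw [Finset.sum_congr rfl this]
  -- now identify with gint
  rw [gint, Polynomial.sum_over_range' _ (by simp) (q.natDegree + 1) (Nat.lt_succ_self _)]

end FInt


section GTest

lemma Lag_derivative_sum (α : ℝ) (k : ℕ) :
    Polynomial.derivative (Lag α k) = -∑ j ∈ Finset.range k, Lag α j := by
  cases k with
  | zero => simp [Lag_zero]
  | succ k => rw [Lag_derivative, Lag_shift_sum]

lemma sum_swap_tri {M : Type*} [AddCommMonoid M] (n : ℕ) (F : ℕ → ℕ → M) :
    ∑ k ∈ Finset.range (n+1), ∑ j ∈ Finset.range k, F k j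
      = ∑ j ∈ Finset.range n, ∑ k ∈ Finset.Ico (j+1) (n+1), F k j := by
  induction n with
  | zero => simp
  | succ n ih =>
    rw [Finset.sum_range_succ, ih]
    have : ∀ j ∈ Finset.range (n+1), ∑ k ∈ Finset.Ico (j+1) (n+2), F k j
        = (∑ k ∈ Finset.Ico (j+1) (n+1), F k j) + F (n+1) j := by
      intro j hj
      simp only [Finset.mem_range] at hj
      rw [Finset.sum_Ico_succ_top (by omega)]
    rw [Finset.sum_congr rfl this, Finset.sum_add_distrib]
    rw [Finset.sum_range_succ (fun j => ∑ k ∈ Finset.Ico (j+1) (n+1), F k j) n]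
    rw [show Finset.Ico (n+1) (n+1) = ∅ from Finset.Ico_self _]
    simp only [Finset.sum_empty, add_zero]

/-- derivative of a Laguerre-series -/
lemma deriv_lag_series (α : ℝ) (n : ℕ) (c : ℕ → ℝ) :
    Polynomial.derivative (∑ k ∈ Finset.range (n+1), c k • Lag α k)
      = -∑ j ∈ Finset.range n, (∑ k ∈ Finset.Ico (j+1) (n+1), c k) • Lag α j := by
  rw [Polynomial.derivative_sum]
  have : ∀ k ∈ Finset.range (n+1), Polynomial.derivative (c k • Lag α k)
      = ∑ j ∈ Finset.range k, -(c k • Lag α j) := by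
    intro k _
    rw [Polynomial.derivative_smul, Lag_derivative_sum, smul_neg, Finset.smul_sum,
      ← Finset.sum_neg_distrib]
  rw [Finset.sum_congr rfl this, sum_swap_tri n (fun k j => -(c k • Lag α j))]
  rw [← Finset.sum_neg_distrib]
  apply Finset.sum_congr rfl
  intro j _
  have h2 : ∀ k ∈ Finset.Ico (j+1) (n+1), -(c k • Lag α j) = (-(c k)) • Lag α j := by
    intro k _; rw [neg_smul]
  rw [Finset.sum_congr rfl h2, ← Finset.sum_smul, Finset.sum_neg_distrib, neg_smul]

end GTest


section HTrace
-- the partial sums s_m = ∑_{k=m+1}^n 1/h_k and trace identities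

noncomputable def sIco (α : ℝ) (n m : ℕ) : ℝ := ∑ k ∈ Finset.Ico (m+1) (n+1), (hh α k)⁻¹

lemma sIco_self (α : ℝ) (n : ℕ) : sIco α n n = 0 := by
  simp [sIco]

lemma sIco_succ {α : ℝ} (n m : ℕ) (h : m ≤ n) :
    sIco α (n+1) m = sIco α n m + (hh α (n+1))⁻¹ := by
  rw [sIco, sIco, Finset.sum_Ico_succ_top (by omega)]

lemma sIco_nonneg {α : ℝ} (hα : -1 < α) (n m : ℕ) : 0 ≤ sIco α n m :=
  Finset.sum_nonneg fun k _ => inv_nonneg.2 (le_of_lt (hh_pos hα k))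

lemma sIco_pos {α : ℝ} (hα : -1 < α) {n m : ℕ} (h : m < n) : 0 < sIco α n m := by
  have hmem : m + 1 ∈ Finset.Ico (m+1) (n+1) := by simp [Finset.mem_Ico]; omega
  have := Finset.single_le_sum (f := fun k => (hh α k)⁻¹)
    (fun k _ => inv_nonneg.2 (le_of_lt (hh_pos hα k))) hmem
  have hpos : 0 < (hh α (m+1))⁻¹ := inv_pos.2 (hh_pos hα (m+1))
  calc (0:ℝ) < (hh α (m+1))⁻¹ := hpos
    _ ≤ sIco α n m := this

lemma hh_inv_succ {α : ℝ} (hα : -1 < α) (n : ℕ) :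
    (hh α (n+1))⁻¹ = ((n:ℝ)+1) / ((α+n+1) * hh α n) := by
  rw [hh_succ]
  have h1 : hh α n ≠ 0 := ne_of_gt (hh_pos hα n)
  have h2 : (α+(n:ℝ)+1) ≠ 0 := by linarith [show (0:ℝ) ≤ (n:ℝ) from Nat.cast_nonneg n]
  have h3 : ((n:ℝ)+1) ≠ 0 := by positivity
  field_simp

lemma sum_hh {α : ℝ} (hα : -1 < α) (m : ℕ) :
    ∑ i ∈ Finset.range (m+1), hh α i = hh α m * (α+m+1)/(α+1) := by
  have hα1 : (α+1) ≠ 0 := by linarith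
  induction m with
  | zero => simp [hh, pp]; field_simp
  | succ m ih =>
    rw [Finset.sum_range_succ, ih, hh_succ]
    have h2 : (α+(m:ℝ)+1) ≠ 0 := by linarith [show (0:ℝ) ≤ (m:ℝ) from Nat.cast_nonneg m]
    have h3 : ((m:ℝ)+1) ≠ 0 := by positivity
    push_cast
    field_simp
    ring

lemma sum_V {α : ℝ} (hα : -1 < α) (n : ℕ) :
    ∑ m ∈ Finset.range (n+1), (hh α m)^2*(α+2*m+1)
      = (hh α n)^2*(α+n+1)^2/(α+1) := by
  have hα1 : (α+1) ≠ 0 := by linarith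
  induction n with
  | zero => simp [hh, pp]; field_simp
  | succ n ih =>
    rw [Finset.sum_range_succ, ih, hh_succ]
    have h2 : (α+(n:ℝ)+1) ≠ 0 := by linarith [show (0:ℝ) ≤ (n:ℝ) from Nat.cast_nonneg n]
    have h3 : ((n:ℝ)+1) ≠ 0 := by positivity
    push_cast
    field_simp
    ring

lemma sum_T1 {α : ℝ} (hα : -1 < α) (n : ℕ) :
    ∑ i ∈ Finset.range (n+1), hh α i * sIco α n i = n*(n+1)/(2*(α+1)) := by
  have hα1 : (α+1) ≠ 0 := by linarith
  induction n with
  | zero => simp [sIco_self]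
  | succ n ih =>
    rw [Finset.sum_range_succ, sIco_self, mul_zero, add_zero]
    have hsplit : ∀ i ∈ Finset.range (n+1), hh α i * sIco α (n+1) i
        = hh α i * sIco α n i + hh α i * (hh α (n+1))⁻¹ := by
      intro i hi
      simp only [Finset.mem_range] at hi
      rw [sIco_succ n i (by omega)]
      ring
    rw [Finset.sum_congr rfl hsplit, Finset.sum_add_distrib, ih, ← Finset.sum_mul,
      sum_hh hα n, hh_inv_succ hα n]
    have h1 : hh α n ≠ 0 := ne_of_gt (hh_pos hα n)
    have h2 : (α+(n:ℝ)+1) ≠ 0 := by linarith [show (0:ℝ) ≤ (n:ℝ) from Nat.cast_nonneg n]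
    have h3 : ((n:ℝ)+1) ≠ 0 := by positivity
    push_cast
    field_simp
    ring

lemma sum_U {α : ℝ} (hα : -1 < α) (n : ℕ) :
    ∑ m ∈ Finset.range (n+1), (hh α m)^2*(α+2*m+1) * sIco α n m
      = hh α n * ((n:ℝ)*(n+1)*(2*n+1) + n*((n:ℝ)^2+3*n+1)*α + (n:ℝ)^2*α^2)
          /((α+1)*(α+2)*(α+3)) := by
  have hα1 : (α+1) ≠ 0 := by linarith
  have hα2 : (α+2) ≠ 0 := by linarith
  have hα3 : (α+3) ≠ 0 := by linarith
  induction n with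
  | zero => simp [sIco_self]
  | succ n ih =>
    rw [Finset.sum_range_succ, sIco_self, mul_zero, add_zero]
    have hsplit : ∀ m ∈ Finset.range (n+1), (hh α m)^2*(α+2*m+1) * sIco α (n+1) m
        = (hh α m)^2*(α+2*m+1) * sIco α n m
          + (hh α m)^2*(α+2*m+1) * (hh α (n+1))⁻¹ := by
      intro m hm
      simp only [Finset.mem_range] at hm
      rw [sIco_succ n m (by omega)]
      ring
    rw [Finset.sum_congr rfl hsplit, Finset.sum_add_distrib, ih, ← Finset.sum_mul,
      sum_V hα n, hh_inv_succ hα n, hh_succ]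
    have h1 : hh α n ≠ 0 := ne_of_gt (hh_pos hα n)
    have h2 : (α+(n:ℝ)+1) ≠ 0 := by linarith [show (0:ℝ) ≤ (n:ℝ) from Nat.cast_nonneg n]
    have h3 : ((n:ℝ)+1) ≠ 0 := by positivity
    push_cast
    field_simp
    ring

lemma sum_W {α : ℝ} (hα : -1 < α) (n : ℕ) :
    ∑ m ∈ Finset.range (n+1), (hh α m)^2*(α+2*m+1) * (sIco α n m)^2
      = (n:ℝ)*(n+1)*(3*(n:ℝ)^2*(α+2)+(2*α^2+5*α+6)*n+(α+1)*(α+6))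
          /(6*(α+1)*(α+2)*(α+3)) := by
  have hα1 : (α+1) ≠ 0 := by linarith
  have hα2 : (α+2) ≠ 0 := by linarith
  have hα3 : (α+3) ≠ 0 := by linarith
  induction n with
  | zero => simp [sIco_self]
  | succ n ih =>
    rw [Finset.sum_range_succ, sIco_self]
    have hsplit : ∀ m ∈ Finset.range (n+1), (hh α m)^2*(α+2*m+1) * (sIco α (n+1) m)^2
        = (hh α m)^2*(α+2*m+1) * (sIco α n m)^2
          + (2 * (hh α (n+1))⁻¹) * ((hh α m)^2*(α+2*m+1) * sIco α n m)
          + ((hh α (n+1))⁻¹)^2 * ((hh α m)^2*(α+2*m+1)) := by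
      intro m hm
      simp only [Finset.mem_range] at hm
      rw [sIco_succ n m (by omega)]
      ring
    rw [Finset.sum_congr rfl hsplit, Finset.sum_add_distrib, Finset.sum_add_distrib, ih,
      ← Finset.mul_sum, ← Finset.mul_sum, sum_U hα n, sum_V hα n, hh_inv_succ hα n, hh_succ]
    have h1 : hh α n ≠ 0 := ne_of_gt (hh_pos hα n)
    have h2 : (α+(n:ℝ)+1) ≠ 0 := by linarith [show (0:ℝ) ≤ (n:ℝ) from Nat.cast_nonneg n]
    have h3 : ((n:ℝ)+1) ≠ 0 := by positivity
    push_cast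
    field_simp
    ring

end HTrace


section IMax

lemma sum_max_symm (N : ℕ) (G g : ℕ → ℝ) :
    ∑ i ∈ Finset.range N, ∑ j ∈ Finset.range N, g i * g j * G (max i j)
      = ∑ m ∈ Finset.range N, G m * g m * (2 * (∑ i ∈ Finset.range m, g i) + g m) := by
  induction N with
  | zero => simp
  | succ N ih =>
    rw [Finset.sum_range_succ (fun m => G m * g m * (2 * (∑ i ∈ Finset.range m, g i) + g m)) N, ← ih]
    rw [Finset.sum_range_succ (fun i => ∑ j ∈ Finset.range (N+1), g i * g j * G (max i j)) N]
    have hrow : ∀ i ∈ Finset.range N, ∑ j ∈ Finset.range (N+1), g i * g j * G (max i j)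
        = (∑ j ∈ Finset.range N, g i * g j * G (max i j)) + g i * g N * G N := by
      intro i hi
      simp only [Finset.mem_range] at hi
      rw [Finset.sum_range_succ]
      congr 2
      rw [max_eq_right (by omega)]
    have hlast : ∑ j ∈ Finset.range (N+1), g N * g j * G (max N j)
        = (∑ j ∈ Finset.range N, g N * g j * G N) + g N * g N * G N := by
      rw [Finset.sum_range_succ]
      congr 1
      · apply Finset.sum_congr rfl
        intro j hj
        simp only [Finset.mem_range] at hj
        rw [max_eq_left (by omega)]
      · rw [max_self]
    rw [Finset.sum_congr rfl hrow, Finset.sum_add_distrib, hlast]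
    have e1 : ∑ i ∈ Finset.range N, g i * g N * G N = G N * g N * (∑ i ∈ Finset.range N, g i) := by
      rw [Finset.mul_sum]
      apply Finset.sum_congr rfl
      intro i _; ring
    have e2 : ∑ j ∈ Finset.range N, g N * g j * G N = G N * g N * (∑ i ∈ Finset.range N, g i) := by
      rw [Finset.mul_sum]
      apply Finset.sum_congr rfl
      intro i _; ring
    rw [e1, e2]
    ring

/-- the double trace sum equals `W/(α+1)` -/
lemma double_sum_eq {α : ℝ} (hα : -1 < α) (n : ℕ) :
    ∑ i ∈ Finset.range (n+1), ∑ j ∈ Finset.range (n+1),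
        hh α i * hh α j * (sIco α n (max i j))^2
      = (∑ m ∈ Finset.range (n+1), (hh α m)^2*(α+2*m+1) * (sIco α n m)^2) / (α+1) := by
  have hα1 : (α+1) ≠ 0 := by linarith
  rw [sum_max_symm (n+1) (fun m => (sIco α n m)^2) (hh α)]
  rw [Finset.sum_div]
  apply Finset.sum_congr rfl
  intro m hm
  have hs := sum_hh hα m
  rw [Finset.sum_range_succ] at hs
  have hsum : ∑ i ∈ Finset.range m, hh α i = hh α m * (α+m+1)/(α+1) - hh α m := by
    linarith
  rw [hsum]
  field_simp
  ring

end IMax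


section JGood

/-- statement-form bound -/
noncomputable def Bst (α : ℝ) (n : ℕ) : ℝ :=
  (n:ℝ) ^ 2 / ((α + 1) * (α + 3)) + (2 * α ^ 2 + 5 * α + 6) * n / (3 * (α + 1) * (α + 2) * (α + 3)) +
        (α + 6) / (3 * (α + 2) * (α + 3))

/-- key balance identity: `∑ h_i·(num'_i - B·s_i) = 0` -/
lemma balance {α : ℝ} (hα : -1 < α) (n : ℕ) :
    ∑ i ∈ Finset.range (n+1), hh α i *
        ((∑ j ∈ Finset.range (n+1), hh α j * (sIco α n (max i j))^2)
          - Bst α n * sIco α n i) = 0 := by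
  have hα1 : (α+1) ≠ 0 := by linarith
  have hα2 : (α+2) ≠ 0 := by linarith
  have hα3 : (α+3) ≠ 0 := by linarith
  have e1 : ∀ i ∈ Finset.range (n+1), hh α i *
        ((∑ j ∈ Finset.range (n+1), hh α j * (sIco α n (max i j))^2)
          - Bst α n * sIco α n i)
      = (∑ j ∈ Finset.range (n+1), hh α i * hh α j * (sIco α n (max i j))^2)
          - Bst α n * (hh α i * sIco α n i) := by
    intro i _
    rw [mul_sub, Finset.mul_sum]
    congr 1
    · apply Finset.sum_congr rfl; intro j _; ring
    · ring
  rw [Finset.sum_congr rfl e1, Finset.sum_sub_distrib, ← Finset.mul_sum,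
    double_sum_eq hα n, sum_W hα n, sum_T1 hα n, Bst]
  field_simp
  ring

lemma exists_good_index {α : ℝ} (hα : -1 < α) {n : ℕ} (hn : 3 ≤ n) :
    ∃ i < n, Bst α n * sIco α n i ≤
        ∑ j ∈ Finset.range (n+1), hh α j * (sIco α n (max i j))^2 := by
  by_contra hcon
  push_neg at hcon
  have hterm : ∀ i ∈ Finset.range (n+1), hh α i *
        ((∑ j ∈ Finset.range (n+1), hh α j * (sIco α n (max i j))^2)
          - Bst α n * sIco α n i) ≤ 0 := by
    intro i hi
    simp only [Finset.mem_range] at hi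
    by_cases h : i < n
    · have := hcon i h
      have hpos := hh_pos hα i
      nlinarith
    · have hin : i = n := by omega
      subst hin
      have hz : ∀ j ∈ Finset.range (i+1), hh α j * (sIco α i (max i j))^2 = 0 := by
        intro j hj
        simp only [Finset.mem_range] at hj
        rw [max_eq_left (by omega), sIco_self]
        ring
      rw [Finset.sum_congr rfl hz, Finset.sum_const, sIco_self]
      simp
  have hstrict : hh α 0 *
        ((∑ j ∈ Finset.range (n+1), hh α j * (sIco α n (max 0 j))^2)
          - Bst α n * sIco α n 0) < 0 := by
    have := hcon 0 (by omega)
    have hpos := hh_pos hα 0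
    nlinarith
  have hlt : ∑ i ∈ Finset.range (n+1), hh α i *
        ((∑ j ∈ Finset.range (n+1), hh α j * (sIco α n (max i j))^2)
          - Bst α n * sIco α n i) < 0 := by
    have h0mem : (0:ℕ) ∈ Finset.range (n+1) := by simp
    rw [← Finset.add_sum_erase _ _ h0mem]
    have hrest : ∑ i ∈ (Finset.range (n+1)).erase 0, hh α i *
        ((∑ j ∈ Finset.range (n+1), hh α j * (sIco α n (max i j))^2)
          - Bst α n * sIco α n i) ≤ 0 :=
      Finset.sum_nonpos fun i hi => hterm i (Finset.mem_of_mem_erase hi)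
    linarith
  rw [balance hα n] at hlt
  exact lt_irrefl 0 hlt
end JGood


section KTest

noncomputable def Ptest (α : ℝ) (n i : ℕ) : Polynomial ℝ :=
  ∑ k ∈ Finset.range (n+1), (if i < k then (hh α k)⁻¹ else 0) • Lag α k

lemma filter_range_eq_Ico (i n : ℕ) :
    Finset.filter (fun k => i < k) (Finset.range (n+1)) = Finset.Ico (i+1) (n+1) := by
  ext k
  simp [Finset.mem_Ico, Finset.mem_range, Finset.mem_filter]
  omega

lemma filter_Ico_eq_Ico (i j n : ℕ) :
    Finset.filter (fun k => i < k) (Finset.Ico (j+1) (n+1)) = Finset.Ico (max i j + 1) (n+1) := by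
  ext k
  simp [Finset.mem_Ico, Finset.mem_filter]
  omega

lemma Ptest_norm {α : ℝ} (hα : -1 < α) (n i : ℕ) :
    gint α (Ptest α n i * Ptest α n i) = Real.Gamma (α+1) * sIco α n i := by
  rw [Ptest, gint_expand hα (n+1)]
  congr 1
  have h1 : ∀ k ∈ Finset.range (n+1),
      (if i < k then (hh α k)⁻¹ else 0) * (if i < k then (hh α k)⁻¹ else 0) * hh α k
      = if i < k then (hh α k)⁻¹ else 0 := by
    intro k _
    by_cases h : i < k
    · simp only [if_pos h]
      have hne : hh α k ≠ 0 := ne_of_gt (hh_pos hα k)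
      field_simp
    · simp [h]
  rw [Finset.sum_congr rfl h1, ← Finset.sum_filter, filter_range_eq_Ico, sIco]

lemma Ptest_deriv (α : ℝ) (n i : ℕ) :
    Polynomial.derivative (Ptest α n i)
      = -∑ j ∈ Finset.range n, sIco α n (max i j) • Lag α j := by
  rw [Ptest, deriv_lag_series]
  congr 1
  apply Finset.sum_congr rfl
  intro j _
  congr 1
  rw [← Finset.sum_filter, filter_Ico_eq_Ico, sIco]

lemma Ptest_deriv_norm {α : ℝ} (hα : -1 < α) (n i : ℕ) :
    gint α (Polynomial.derivative (Ptest α n i) * Polynomial.derivative (Ptest α n i))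
      = Real.Gamma (α+1) * ∑ j ∈ Finset.range n, hh α j * (sIco α n (max i j))^2 := by
  rw [Ptest_deriv, neg_mul_neg, gint_expand hα n]
  congr 1
  apply Finset.sum_congr rfl
  intro j _
  ring

lemma Ptest_natDegree_le (α : ℝ) (n i : ℕ) : (Ptest α n i).natDegree ≤ n := by
  apply Polynomial.natDegree_le_iff_coeff_eq_zero.2
  intro m hm
  rw [Ptest, Polynomial.finset_sum_coeff]
  apply Finset.sum_eq_zero
  intro k hk
  simp only [Finset.mem_range] at hk
  rw [Polynomial.coeff_smul, Lag_coeff_of_gt α (by omega), smul_zero]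

lemma Ptest_ne_zero {α : ℝ} (hα : -1 < α) {n i : ℕ} (h : i < n) : Ptest α n i ≠ 0 := by
  intro hz
  have h1 := Ptest_norm hα n i
  rw [hz, mul_zero, gint_zero] at h1
  have h2 : 0 < Real.Gamma (α+1) * sIco α n i :=
    mul_pos (Real.Gamma_pos_of_pos (by linarith)) (sIco_pos hα h)
  rw [← h1] at h2
  exact lt_irrefl 0 h2

/-- every polynomial of degree ≤ N is a Laguerre series -/
lemma exists_expansion (α : ℝ) : ∀ (N : ℕ) (p : Polynomial ℝ), p.natDegree ≤ N →
    ∃ c : ℕ → ℝ, p = ∑ k ∈ Finset.range (N+1), c k • Lag α k := by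
  intro N
  induction N with
  | zero =>
    intro p hp
    refine ⟨fun _ => p.coeff 0, ?_⟩
    rw [Polynomial.eq_C_of_natDegree_le_zero hp, Finset.sum_range_one, Lag_zero]
    rw [Polynomial.smul_C, smul_eq_mul, mul_one]
    simp
  | succ N ih =>
    intro p hp
    set μ := p.coeff (N+1) * (-1:ℝ)^(N+1) * ((N+1).factorial : ℝ) with hμ
    set q := p - μ • Lag α (N+1) with hq
    have hqdeg : q.natDegree ≤ N := by
      apply Polynomial.natDegree_le_iff_coeff_eq_zero.2
      intro m hm
      rw [hq, Polynomial.coeff_sub, Polynomial.coeff_smul]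
      by_cases h : m = N+1
      · subst h
        have hf : (((N+1).factorial : ℕ) : ℝ) ≠ 0 := by exact_mod_cast Nat.factorial_ne_zero (N+1)
        have hsq : (-1:ℝ)^(N+1) * (-1:ℝ)^(N+1) = 1 := by
          rw [← pow_add]; exact Even.neg_one_pow ⟨N+1, by ring⟩
        rw [Lag_coeff_self, smul_eq_mul,
          show μ * ((-1:ℝ)^(N+1)/(((N+1).factorial:ℕ):ℝ))
            = p.coeff (N+1) * ((-1:ℝ)^(N+1)*(-1:ℝ)^(N+1))
                * ((((N+1).factorial:ℕ):ℝ)/(((N+1).factorial:ℕ):ℝ)) from by rw [hμ]; ring,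
          hsq, div_self hf]
        ring
      · have hgt : N + 1 < m := by omega
        rw [Polynomial.coeff_eq_zero_of_natDegree_lt (lt_of_le_of_lt hp hgt),
          Lag_coeff_of_gt α hgt, smul_zero, sub_zero]
    obtain ⟨c, hc⟩ := ih q hqdeg
    refine ⟨fun k => if k = N+1 then μ else c k, ?_⟩
    rw [Finset.sum_range_succ]
    have h1 : (fun k => if k = N+1 then μ else c k) (N+1) • Lag α (N+1) = μ • Lag α (N+1) := by
      simp
    have hsame : ∀ k ∈ Finset.range (N+1),
        (fun k => if k = N+1 then μ else c k) k • Lag α k = c k • Lag α k := by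
      intro k hk
      simp only [Finset.mem_range] at hk
      simp only []
      rw [if_neg (by omega)]
    rw [h1, Finset.sum_congr rfl hsame, ← hc, hq]
    ring

end KTest


end

open MeasureTheory

/-- The weighted `L²` norm with the Laguerre weight `w_α(x) = x^α e^{-x}` on `(0,∞)`. -/
noncomputable def laguerreNorm (α : ℝ) (f : ℝ → ℝ) : ℝ :=
  Real.sqrt (∫ x in Set.Ioi (0 : ℝ), (f x) ^ 2 * (x ^ α * Real.exp (-x)))

/-- The best Markov constant `c_n(α)` in the inequality
`‖p'‖_{w_α} ≤ c_n(α) ‖p‖_{w_α}` over polynomials of degree at most `n`. -/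
noncomputable def markovConst (n : ℕ) (α : ℝ) : ℝ :=
  sSup {r : ℝ | ∃ p : Polynomial ℝ, p ≠ 0 ∧ p.natDegree ≤ n ∧
    r = laguerreNorm α (fun x => (Polynomial.derivative p).eval x) /
        laguerreNorm α (fun x => p.eval x)}

section Final

lemma laguerreNorm_poly {α : ℝ} (hα : -1 < α) (q : Polynomial ℝ) :
    laguerreNorm α (fun x => q.eval x) = Real.sqrt (gint α (q*q)) := by
  unfold laguerreNorm
  rw [← integral_eq_gint hα q]

lemma gint_sq_nonneg {α : ℝ} (hα : -1 < α) (q : Polynomial ℝ) :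
    0 ≤ gint α (q*q) := by
  rw [← integral_eq_gint hα q]
  apply MeasureTheory.setIntegral_nonneg measurableSet_Ioi
  intro x hx
  have hx0 : (0:ℝ) < x := hx
  positivity

lemma markov_bdd {α : ℝ} (hα : -1 < α) (n : ℕ) :
    BddAbove {r : ℝ | ∃ p : Polynomial ℝ, p ≠ 0 ∧ p.natDegree ≤ n ∧
      r = laguerreNorm α (fun x => (Polynomial.derivative p).eval x) /
          laguerreNorm α (fun x => p.eval x)} := by
  set m0 := ∑ k ∈ Finset.range (n+1), (hh α k)⁻¹ with hm0
  set hsum := ∑ j ∈ Finset.range n, hh α j with hhsum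
  set K := (n:ℝ) * m0 * hsum with hK
  have hm0nn : 0 ≤ m0 := Finset.sum_nonneg fun k _ => inv_nonneg.2 (le_of_lt (hh_pos hα k))
  have hsumnn : 0 ≤ hsum := Finset.sum_nonneg fun j _ => le_of_lt (hh_pos hα j)
  have hK0 : 0 ≤ K := by
    apply mul_nonneg (mul_nonneg (Nat.cast_nonneg n) hm0nn) hsumnn
  refine ⟨Real.sqrt K, ?_⟩
  rintro r ⟨p, hp0, hpdeg, rfl⟩
  obtain ⟨c, hc⟩ := exists_expansion α n p hpdeg
  set A := ∑ k ∈ Finset.range (n+1), c k * c k * hh α k with hA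
  set Γ1 := Real.Gamma (α+1) with hΓ
  have hΓpos : 0 < Γ1 := Real.Gamma_pos_of_pos (by linarith)
  have hgpp : gint α (p*p) = Γ1 * A := by
    conv_lhs => rw [hc]
    exact gint_expand hα (n+1) c c
  have hAnn : ∀ k ∈ Finset.range (n+1), 0 ≤ c k * c k * hh α k :=
    fun k _ => mul_nonneg (mul_self_nonneg _) (le_of_lt (hh_pos hα k))
  have hApos : 0 < A := by
    by_cases hall : ∀ k ∈ Finset.range (n+1), c k = 0
    · exfalso
      apply hp0
      rw [hc]
      apply Finset.sum_eq_zero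
      intro k hk
      rw [hall k hk, zero_smul]
    · push_neg at hall
      obtain ⟨k0, hk0mem, hk0⟩ := hall
      have h1 : 0 < c k0 * c k0 * hh α k0 :=
        mul_pos (mul_self_pos.2 hk0) (hh_pos hα k0)
      calc (0:ℝ) < c k0 * c k0 * hh α k0 := h1
        _ ≤ A := Finset.single_le_sum hAnn hk0mem
  set d := fun j => ∑ k ∈ Finset.Ico (j+1) (n+1), c k with hd
  have hderiv : Polynomial.derivative p = -∑ j ∈ Finset.range n, d j • Lag α j := by
    conv_lhs => rw [hc]
    rw [deriv_lag_series]
  have hgdd : gint α (Polynomial.derivative p * Polynomial.derivative p)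
      = Γ1 * ∑ j ∈ Finset.range n, d j * d j * hh α j := by
    rw [hderiv, neg_mul_neg]
    exact gint_expand hα n d d
  -- coefficient bounds
  have hcsq : ∀ k ∈ Finset.range (n+1), c k ^ 2 ≤ A * (hh α k)⁻¹ := by
    intro k hk
    have h1 : c k * c k * hh α k ≤ A := Finset.single_le_sum hAnn hk
    have h2 : 0 < hh α k := hh_pos hα k
    rw [sq]
    calc c k * c k = (c k * c k * hh α k) * (hh α k)⁻¹ := by
          field_simp
      _ ≤ A * (hh α k)⁻¹ := by
          apply mul_le_mul_of_nonneg_right h1 (inv_nonneg.2 (le_of_lt h2))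
  have hsum_csq : ∑ k ∈ Finset.range (n+1), c k ^ 2 ≤ A * m0 := by
    rw [hm0, Finset.mul_sum]
    exact Finset.sum_le_sum hcsq
  have hdsq : ∀ j ∈ Finset.range n, d j * d j ≤ (n:ℝ) * (A * m0) := by
    intro j hj
    have h1 : (d j)^2 ≤ (Finset.Ico (j+1) (n+1)).card * ∑ k ∈ Finset.Ico (j+1) (n+1), c k ^ 2 :=
      sq_sum_le_card_mul_sum_sq
    have hcard : ((Finset.Ico (j+1) (n+1)).card : ℝ) ≤ n := by
      rw [Nat.card_Ico]
      exact_mod_cast Nat.le_of_lt_succ (by omega : n + 1 - (j+1) < n + 1)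
    have h2 : ∑ k ∈ Finset.Ico (j+1) (n+1), c k ^ 2 ≤ ∑ k ∈ Finset.range (n+1), c k ^ 2 := by
      apply Finset.sum_le_sum_of_subset_of_nonneg
      · intro k hk
        simp only [Finset.mem_Ico] at hk
        simp only [Finset.mem_range]
        omega
      · intro k _ _
        exact sq_nonneg _
    have h3 : (0:ℝ) ≤ ∑ k ∈ Finset.Ico (j+1) (n+1), c k ^ 2 :=
      Finset.sum_nonneg fun k _ => sq_nonneg _
    calc d j * d j = (d j)^2 := (sq (d j)).symm
      _ ≤ (Finset.Ico (j+1) (n+1)).card * ∑ k ∈ Finset.Ico (j+1) (n+1), c k ^ 2 := h1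
      _ ≤ (n:ℝ) * ∑ k ∈ Finset.Ico (j+1) (n+1), c k ^ 2 := by
          apply mul_le_mul_of_nonneg_right hcard h3
      _ ≤ (n:ℝ) * (A * m0) := by
          apply mul_le_mul_of_nonneg_left (le_trans h2 hsum_csq) (Nat.cast_nonneg n)
  have hD : ∑ j ∈ Finset.range n, d j * d j * hh α j ≤ K * A := by
    have h1 : ∀ j ∈ Finset.range n, d j * d j * hh α j ≤ ((n:ℝ) * (A * m0)) * hh α j := by
      intro j hj
      exact mul_le_mul_of_nonneg_right (hdsq j hj) (le_of_lt (hh_pos hα j))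
    calc ∑ j ∈ Finset.range n, d j * d j * hh α j
        ≤ ∑ j ∈ Finset.range n, ((n:ℝ) * (A * m0)) * hh α j := Finset.sum_le_sum h1
      _ = K * A := by rw [← Finset.mul_sum, hK]; ring
  -- conclude
  rw [laguerreNorm_poly hα, laguerreNorm_poly hα]
  have hgpp_pos : 0 < gint α (p*p) := by rw [hgpp]; exact mul_pos hΓpos hApos
  have hb : gint α (Polynomial.derivative p * Polynomial.derivative p) ≤ K * gint α (p*p) := by
    rw [hgdd, hgpp]
    calc Γ1 * ∑ j ∈ Finset.range n, d j * d j * hh α j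
        ≤ Γ1 * (K * A) := mul_le_mul_of_nonneg_left hD (le_of_lt hΓpos)
      _ = K * (Γ1 * A) := by ring
  have hsq1 : Real.sqrt (gint α (Polynomial.derivative p * Polynomial.derivative p))
      ≤ Real.sqrt K * Real.sqrt (gint α (p*p)) := by
    rw [← Real.sqrt_mul hK0]
    exact Real.sqrt_le_sqrt hb
  have hspos : 0 < Real.sqrt (gint α (p*p)) := Real.sqrt_pos.2 hgpp_pos
  rw [div_le_iff₀ hspos]
  exact hsq1

theorem markov_dorfler_lower (α : ℝ) (hα : -1 < α) (n : ℕ) (hn : 3 ≤ n) :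
    n ^ 2 / ((α + 1) * (α + 3)) + (2 * α ^ 2 + 5 * α + 6) * n / (3 * (α + 1) * (α + 2) * (α + 3)) +
        (α + 6) / (3 * (α + 2) * (α + 3)) ≤ (markovConst n α) ^ 2 := by
  obtain ⟨i, hi, hgood⟩ := exists_good_index hα hn
  set Γ1 := Real.Gamma (α+1) with hΓ
  have hΓpos : 0 < Γ1 := Real.Gamma_pos_of_pos (by linarith)
  set P := Ptest α n i with hP
  set num := ∑ j ∈ Finset.range (n+1), hh α j * (sIco α n (max i j))^2 with hnum
  set den := sIco α n i with hden
  have hdenpos : 0 < den := sIco_pos hα hi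
  have hnum_eq : gint α (Polynomial.derivative P * Polynomial.derivative P) = Γ1 * num := by
    rw [hP, Ptest_deriv_norm hα n i, hnum]
    congr 1
    rw [Finset.sum_range_succ, max_eq_right (le_of_lt hi), sIco_self]
    simp
  have hden_eq : gint α (P * P) = Γ1 * den := by
    rw [hP, Ptest_norm hα n i, hden]
  set r := laguerreNorm α (fun x => (Polynomial.derivative P).eval x) /
      laguerreNorm α (fun x => P.eval x) with hr
  have hmem : r ∈ {r : ℝ | ∃ p : Polynomial ℝ, p ≠ 0 ∧ p.natDegree ≤ n ∧
      r = laguerreNorm α (fun x => (Polynomial.derivative p).eval x) /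
          laguerreNorm α (fun x => p.eval x)} :=
    ⟨P, Ptest_ne_zero hα hi, Ptest_natDegree_le α n i, rfl⟩
  have hr_eq : r = Real.sqrt (Γ1 * num) / Real.sqrt (Γ1 * den) := by
    rw [hr, laguerreNorm_poly hα, laguerreNorm_poly hα, hnum_eq, hden_eq]
  have hnum_nn : 0 ≤ Γ1 * num := by
    rw [← hnum_eq]
    exact gint_sq_nonneg hα _
  have hden_pos2 : 0 < Γ1 * den := mul_pos hΓpos hdenpos
  have hr2 : r^2 = num / den := by
    rw [hr_eq, div_pow, Real.sq_sqrt hnum_nn, Real.sq_sqrt (le_of_lt hden_pos2),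
      mul_div_mul_left _ _ (ne_of_gt hΓpos)]
  have hB : Bst α n ≤ r^2 := by
    rw [hr2, le_div_iff₀ hdenpos]
    rw [hnum, hden]
    exact hgood
  have hr0 : 0 ≤ r := by
    rw [hr_eq]
    apply div_nonneg (Real.sqrt_nonneg _) (Real.sqrt_nonneg _)
  have hrM : r ≤ markovConst n α := le_csSup (markov_bdd hα n) hmem
  have hfinal : Bst α n ≤ (markovConst n α)^2 := by
    calc Bst α n ≤ r^2 := hB
      _ ≤ (markovConst n α)^2 := by
          apply pow_le_pow_left₀ hr0 hrM
  simpa [Bst] using hfinal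

end Final
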